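/- Under the r-fold crossed random effects model, the variance of the sample mean equals (1/N)·∑_{u⊆[r], u≠∅} ν_u σ²_u, where ν_u = (1/N)∑_i Z_i N_{i,u}. -/

import Mathlib

open scoped BigOperators

/-- Theorem 1 (random effects variance of the sample mean):
under the `r`-fold crossed random effects model,
`Var(X̄) = (1/N) ∑_{u ≠ ∅} ν_u σ²_u`. -/
theorem stmt0 {r : ℕ} (hr : 1 ≤ r) {Ω : Type*}
    (E : (Ω → ℝ) →ₗ[ℝ] ℝ) (hE1 : E (fun _ => 1) = 1)
    (Z : (Fin r → ℕ) → ℝ)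
    (hZ01 : ∀ i, Z i = 0 ∨ Z i = 1)
    (hZfin : (Function.support Z).Finite)
    (N : ℝ) (hN : N = ∑ᶠ i, Z i) (hNpos : 0 < N)
    (μ : ℝ) (σ2 : Finset (Fin r) → ℝ)
    (ε : (Fin r → ℕ) → Finset (Fin r) → Ω → ℝ)
    (hdep : ∀ i i' u, (∀ j ∈ u, i j = i' j) → ε i u = ε i' u)
    (hmean : ∀ i u, u.Nonempty → E (ε i u) = 0)
    (hcov : ∀ i i' u u', u.Nonempty → u'.Nonempty →
      E (fun ω => ε i u ω * ε i' u' ω)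
        = σ2 u * (if u = u' ∧ ∀ j ∈ u, i j = i' j then (1 : ℝ) else 0))
    (X : (Fin r → ℕ) → Ω → ℝ)
    (hX : ∀ i ω, X i ω = μ + ∑ u ∈ Finset.univ.erase (∅ : Finset (Fin r)), ε i u ω)
    (Nmatch : (Fin r → ℕ) → Finset (Fin r) → ℝ)
    (hNmatch : ∀ i u, Nmatch i u
      = ∑ᶠ i', Z i' * (if ∀ j ∈ u, i j = i' j then (1 : ℝ) else 0))
    (ν : Finset (Fin r) → ℝ)
    (hν : ∀ u, ν u = (1 / N) * ∑ᶠ i, Z i * Nmatch i u)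
    (Xbar : Ω → ℝ)
    (hXbar : ∀ ω, Xbar ω = (1 / N) * ∑ᶠ i, Z i * X i ω) :
    E (fun ω => (Xbar ω - μ) ^ 2)
      = (1 / N) * ∑ u ∈ Finset.univ.erase (∅ : Finset (Fin r)), ν u * σ2 u := by
  classical
  set S : Finset (Fin r → ℕ) := hZfin.toFinset with hS
  set U : Finset (Finset (Fin r)) := Finset.univ.erase (∅ : Finset (Fin r)) with hU
  have hfin : ∀ g : (Fin r → ℕ) → ℝ, ∑ᶠ i, Z i * g i = ∑ i ∈ S, Z i * g i := by
    intro g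
    apply finsum_eq_sum_of_support_subset
    intro i hi
    simp only [Function.mem_support] at hi
    have : Z i ≠ 0 := left_ne_zero_of_mul hi
    simp [hS, Set.Finite.coe_toFinset, Function.mem_support, this]
  have hNS : ∑ i ∈ S, Z i = N := by
    rw [hN]
    symm
    apply finsum_eq_sum_of_support_subset
    intro i hi
    simp [hS, Set.Finite.coe_toFinset, Function.mem_support]
    simpa using hi
  have hUne : ∀ u ∈ U, u.Nonempty := fun u hu =>
    Finset.nonempty_iff_ne_empty.2 (Finset.mem_erase.1 hu).1
  have h1 : ∀ ω, Xbar ω - μ = (1 / N) * ∑ u ∈ U, ∑ i ∈ S, Z i * ε i u ω := by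
    intro ω
    rw [hXbar ω, hfin (fun i => X i ω)]
    have h2 : ∑ i ∈ S, Z i * X i ω
        = N * μ + ∑ u ∈ U, ∑ i ∈ S, Z i * ε i u ω := by
      calc ∑ i ∈ S, Z i * X i ω
          = ∑ i ∈ S, (Z i * μ + ∑ u ∈ U, Z i * ε i u ω) := by
            refine Finset.sum_congr rfl fun i _ => ?_
            rw [hX, mul_add, Finset.mul_sum]
        _ = (∑ i ∈ S, Z i) * μ + ∑ i ∈ S, ∑ u ∈ U, Z i * ε i u ω := by
            rw [Finset.sum_add_distrib, Finset.sum_mul]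
        _ = N * μ + ∑ u ∈ U, ∑ i ∈ S, Z i * ε i u ω := by
            rw [hNS, Finset.sum_comm]
    rw [h2]
    field_simp
    ring
  have key : (fun ω => (Xbar ω - μ) ^ 2)
      = ∑ u ∈ U, ∑ u' ∈ U, ∑ i ∈ S, ∑ i' ∈ S,
          ((1 / N) ^ 2 * (Z i * Z i')) • (fun ω => ε i u ω * ε i' u' ω) := by
    funext ω
    simp only [Finset.sum_apply, Pi.smul_apply, smul_eq_mul]
    rw [h1 ω]
    have hsq : ∀ A : ℝ, (1 / N * A) ^ 2 = (1 / N) ^ 2 * (A * A) := fun A => by ring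
    rw [hsq, Finset.sum_mul_sum, Finset.mul_sum]
    refine Finset.sum_congr rfl fun u _ => ?_
    rw [Finset.mul_sum]
    refine Finset.sum_congr rfl fun u' _ => ?_
    rw [Finset.sum_mul_sum, Finset.mul_sum]
    refine Finset.sum_congr rfl fun i _ => ?_
    rw [Finset.mul_sum]
    refine Finset.sum_congr rfl fun i' _ => ?_
    ring
  have hν' : ∀ u, ν u = (1 / N) * ∑ i ∈ S, Z i *
      ∑ i' ∈ S, Z i' * (if ∀ j ∈ u, i j = i' j then (1 : ℝ) else 0) := by
    intro u
    rw [hν, hfin (fun i => Nmatch i u)]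
    congr 1
    refine Finset.sum_congr rfl fun i _ => ?_
    rw [hNmatch, hfin]
  rw [key]
  simp only [map_sum, map_smul, smul_eq_mul]
  have step : ∀ u ∈ U, ∑ u' ∈ U, ∑ i ∈ S, ∑ i' ∈ S,
      (1 / N) ^ 2 * (Z i * Z i') * E (fun ω => ε i u ω * ε i' u' ω)
      = ∑ i ∈ S, ∑ i' ∈ S, (1 / N) ^ 2 * (Z i * Z i') *
          (σ2 u * (if ∀ j ∈ u, i j = i' j then (1 : ℝ) else 0)) := by
    intro u hu
    rw [Finset.sum_eq_single_of_mem u hu]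
    · refine Finset.sum_congr rfl fun i _ => Finset.sum_congr rfl fun i' _ => ?_
      rw [hcov i i' u u (hUne u hu) (hUne u hu)]
      simp
    · intro u' hu' hne
      refine Finset.sum_eq_zero fun i _ => Finset.sum_eq_zero fun i' _ => ?_
      rw [hcov i i' u u' (hUne u hu) (hUne u' hu')]
      have : ¬ (u = u' ∧ ∀ j ∈ u, i j = i' j) := fun h => hne h.1.symm
      rw [if_neg this]
      ring
  rw [Finset.sum_congr rfl step]
  simp only [hν', Finset.mul_sum, Finset.sum_mul]
  refine Finset.sum_congr rfl fun u _ => Finset.sum_congr rfl fun i _ =>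
    Finset.sum_congr rfl fun i' _ => ?_
  ring
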